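/- arXiv:2007.01495 — 4 statements merged into one kernel-verified Lean document; each statement's English description precedes it below -/
import Mathlib

section
/- Let ū : ℝⁿ → ℝ be a convex spacelike function whose blowdown satisfies ū(x) − V_F(x) → 0 as |x| → ∞, where F ⊂ S^{n-1} is closed and V_F(x) = sup_{ξ∈F} ξ·x. Then the Legendre transform ū* vanishes on ∂F̃ ∩ S^{n-1}, i.e., for every ξ ∈ F one has ū*(ξ) = sup_{x ∈ ℝⁿ}(x·ξ − ū(x)) = 0. -/
/-- If `ū` is a convex spacelike function with `ū ≥ V_F` and
`ū(rξ) − V_F(rξ) → 0` as `r → ∞` for directions `ξ ∈ F`, then the Legendre transform of `ū`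
vanishes at every `ξ ∈ F`, i.e. `sup_x (x·ξ − ū(x)) = 0`. -/
theorem stmt_12 (n : ℕ) (F : Set (EuclideanSpace ℝ (Fin n))) (hF : IsClosed F)
    (hF1 : F ⊆ Metric.sphere 0 1)
    (ub VF : EuclideanSpace ℝ (Fin n) → ℝ)
    (hVF : ∀ x, VF x = ⨆ ξ : F, ∑ i, (ξ : EuclideanSpace ℝ (Fin n)) i * x i)
    (hconv : ConvexOn ℝ Set.univ ub)
    (hdiff : Differentiable ℝ ub)
    (hsp : ∀ x, ‖fderiv ℝ ub x‖ < 1)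
    (hge : ∀ x, VF x ≤ ub x)
    (hlim : ∀ ξ ∈ F, Filter.Tendsto (fun r : ℝ => ub (r • ξ) - VF (r • ξ))
      Filter.atTop (nhds 0)) :
    ∀ ξ ∈ F, IsLUB
      (Set.range fun x : EuclideanSpace ℝ (Fin n) =>
        (∑ i, x i * (ξ : EuclideanSpace ℝ (Fin n)) i) - ub x) 0 := by
  have inner_eq : ∀ a b : EuclideanSpace ℝ (Fin n),
      (inner ℝ a b : ℝ) = ∑ i, a i * b i := by
    intro a b
    simp [PiLp.inner_apply, RCLike.inner_apply, mul_comm]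
  intro ξ hξ
  have hnξ : ‖ξ‖ = 1 := by simpa using hF1 hξ
  -- VF x ≥ ξ·x and VF x ≤ ‖x‖
  have hbdd : ∀ x : EuclideanSpace ℝ (Fin n),
      BddAbove (Set.range fun ξ' : F => ∑ i, (ξ' : EuclideanSpace ℝ (Fin n)) i * x i) := by
    intro x
    refine ⟨‖x‖, ?_⟩
    rintro y ⟨ξ', rfl⟩
    have h1 : ‖(ξ' : EuclideanSpace ℝ (Fin n))‖ = 1 := by simpa using hF1 ξ'.2
    calc ∑ i, (ξ' : EuclideanSpace ℝ (Fin n)) i * x i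
        = (inner ℝ (ξ' : EuclideanSpace ℝ (Fin n)) x : ℝ) := (inner_eq _ _).symm
      _ ≤ ‖(ξ' : EuclideanSpace ℝ (Fin n))‖ * ‖x‖ := real_inner_le_norm _ _
      _ = ‖x‖ := by rw [h1, one_mul]
  have hVFge : ∀ x, (∑ i, ξ i * x i) ≤ VF x := by
    intro x
    rw [hVF]
    exact le_ciSup (hbdd x) ⟨ξ, hξ⟩
  have hVFle : ∀ x : EuclideanSpace ℝ (Fin n), VF x ≤ ‖x‖ := by
    intro x
    rw [hVF]
    haveI : Nonempty F := ⟨⟨ξ, hξ⟩⟩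
    apply ciSup_le
    intro ξ'
    have h1 : ‖(ξ' : EuclideanSpace ℝ (Fin n))‖ = 1 := by simpa using hF1 ξ'.2
    calc ∑ i, (ξ' : EuclideanSpace ℝ (Fin n)) i * x i
        = (inner ℝ (ξ' : EuclideanSpace ℝ (Fin n)) x : ℝ) := (inner_eq _ _).symm
      _ ≤ ‖(ξ' : EuclideanSpace ℝ (Fin n))‖ * ‖x‖ := real_inner_le_norm _ _
      _ = ‖x‖ := by rw [h1, one_mul]
  constructor
  · -- 0 is an upper bound
    rintro y ⟨x, rfl⟩
    have h1 : (∑ i, x i * ξ i) = ∑ i, ξ i * x i := by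
      simp [mul_comm]
    have := (hVFge x).trans (hge x)
    simp only [h1]
    linarith
  · -- least upper bound
    intro b hb
    have hself : (∑ i, ξ i * ξ i) = 1 := by
      have : (inner ℝ ξ ξ : ℝ) = 1 := by
        rw [real_inner_self_eq_norm_sq, hnξ]; norm_num
      rw [← inner_eq]; exact this
    have key : ∀ r : ℝ, 0 ≤ r → r - ub (r • ξ) ≤ b := by
      intro r hr
      have hmem : (∑ i, (r • ξ : EuclideanSpace ℝ (Fin n)) i * ξ i) - ub (r • ξ)
          ∈ Set.range fun x : EuclideanSpace ℝ (Fin n) =>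
            (∑ i, x i * ξ i) - ub x := ⟨r • ξ, rfl⟩
      have := hb hmem
      have hsum : (∑ i, (r • ξ : EuclideanSpace ℝ (Fin n)) i * ξ i) = r := by
        have : ∀ i, (r • ξ : EuclideanSpace ℝ (Fin n)) i = r * ξ i := fun i => rfl
        simp only [this, mul_assoc, ← Finset.mul_sum, hself, mul_one]
      rwa [hsum] at this
    -- VF (r•ξ) = r for r ≥ 0
    have hVFr : ∀ r : ℝ, 0 ≤ r → VF (r • ξ) = r := by
      intro r hr
      have h1 : r ≤ VF (r • ξ) := by
        have := hVFge (r • ξ)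
        have hsum : (∑ i, ξ i * (r • ξ : EuclideanSpace ℝ (Fin n)) i) = r := by
          have heq : ∀ i, (r • ξ : EuclideanSpace ℝ (Fin n)) i = r * ξ i := fun i => rfl
          simp only [heq]
          rw [show (∑ i, ξ i * (r * ξ i)) = r * ∑ i, ξ i * ξ i by
            rw [Finset.mul_sum]; congr 1; ext i; ring, hself, mul_one]
        rwa [hsum] at this
      have h2 : VF (r • ξ) ≤ r := by
        have := hVFle (r • ξ)
        rwa [norm_smul, hnξ, mul_one, Real.norm_of_nonneg hr] at this
      linarith
    have htend : Filter.Tendsto (fun r : ℝ => r - ub (r • ξ)) Filter.atTop (nhds 0) := by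
      have := (hlim ξ hξ).neg
      rw [neg_zero] at this
      refine this.congr' ?_
      filter_upwards [Filter.eventually_ge_atTop (0 : ℝ)] with r hr
      rw [hVFr r hr]; ring
    exact le_of_tendsto htend (by
      filter_upwards [Filter.eventually_ge_atTop (0 : ℝ)] with r hr
      exact key r hr)
end

section
/- For any C² function u on a domain Ω ⊆ B₁ ⊂ ℝⁿ, with w = √(1−|ξ|²) and γ̃_ik = δ_ik − ξ_iξ_k/(1+w), the covariant Hessian of ũ = u/w with respect to the hyperbolic (Klein model) metric, computed in the orthonormal frame e_i = w γ̃_ik ∂/∂ξ_k, satisfies ∇̄_i∇̄_j(u/w) − (u/w)δ_ij = w γ̃_ik u_{kl} γ̃_lj, where u_{kl} = ∂²u/∂ξ_k∂ξ_l. -/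
set_option maxHeartbeats 1000000
open scoped BigOperators

noncomputable def LC {n : ℕ} (c : Fin n → ℝ) : (Fin n → ℝ) →L[ℝ] ℝ :=
  ∑ l, (c l) • ContinuousLinearMap.proj (R := ℝ) (φ := fun _ : Fin n => ℝ) l

lemma LC_apply {n : ℕ} (c v : Fin n → ℝ) : LC c v = ∑ l, c l * v l := by
  simp [LC, ContinuousLinearMap.sum_apply]

lemma LC_single {n : ℕ} (c : Fin n → ℝ) (s : Fin n) : LC c (Pi.single s 1) = c s := by
  simp [LC_apply, Pi.single_apply]

lemma hasFDerivAt_sumsq {n : ℕ} (η : Fin n → ℝ) :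
    HasFDerivAt (fun η : Fin n → ℝ => ∑ l, η l ^ 2) (LC (fun l => 2 * η l)) η := by
  apply HasFDerivAt.fun_sum (fun l _ => ?_)
  have h := ((ContinuousLinearMap.proj (R := ℝ) (φ := fun _ : Fin n => ℝ) l).hasFDerivAt (x := η)).fun_mul
    ((ContinuousLinearMap.proj (R := ℝ) (φ := fun _ : Fin n => ℝ) l).hasFDerivAt (x := η))
  have e : (fun y : Fin n → ℝ => y l ^ 2) = fun y => y l * y l := by funext y; ring
  rw [e]
  refine h.congr_fderiv (Eq.symm ?_)
  ext v
  simp [two_mul]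
  ring

lemma hasFDerivAt_W {n : ℕ} (η : Fin n → ℝ) (h : ∑ l, η l ^ 2 < 1) :
    HasFDerivAt (fun η : Fin n → ℝ => Real.sqrt (1 - ∑ l, η l ^ 2))
      (LC (fun l => -(η l) / Real.sqrt (1 - ∑ l, η l ^ 2))) η := by
  have hpos : 0 < 1 - ∑ l, η l ^ 2 := by linarith
  have hq : HasFDerivAt (fun η : Fin n → ℝ => 1 - ∑ l, η l ^ 2)
      (LC (fun l => -(2 * η l))) η := by
    have := (hasFDerivAt_const (1:ℝ) η).sub (hasFDerivAt_sumsq η)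
    refine this.congr_fderiv (Eq.symm ?_)
    ext v
    simp [LC_apply, Finset.sum_neg_distrib]
  have hs := (Real.hasDerivAt_sqrt (ne_of_gt hpos)).comp_hasFDerivAt η hq
  refine hs.congr_fderiv (Eq.symm ?_)
  have hW : Real.sqrt (1 - ∑ l, η l ^ 2) ≠ 0 := by positivity
  ext v
  simp [LC_apply, Finset.mul_sum]
  rw [← Finset.sum_neg_distrib]
  apply Finset.sum_congr rfl
  intro l _
  field_simp


lemma ut_fderiv {n : ℕ} (u : (Fin n → ℝ) → ℝ) (η : Fin n → ℝ)
    (hu : DifferentiableAt ℝ u η) (h : ∑ l, η l ^ 2 < 1) (s : Fin n) :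
    fderiv ℝ (fun η => u η / Real.sqrt (1 - ∑ l, η l ^ 2)) η (Pi.single s 1)
      = fderiv ℝ u η (Pi.single s 1) / Real.sqrt (1 - ∑ l, η l ^ 2)
        + u η * η s / (Real.sqrt (1 - ∑ l, η l ^ 2)) ^ 3 := by
  have hpos : 0 < Real.sqrt (1 - ∑ l, η l ^ 2) := Real.sqrt_pos.mpr (by linarith)
  have hne := ne_of_gt hpos
  have hinv := (hasDerivAt_inv hne).comp_hasFDerivAt η (hasFDerivAt_W η h)
  have hm := hu.hasFDerivAt.fun_mul hinv
  have he : (fun η : Fin n → ℝ => u η / Real.sqrt (1 - ∑ l, η l ^ 2))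
      = (fun η => u η * (Real.sqrt (1 - ∑ l, η l ^ 2))⁻¹) := by
    funext η; rw [div_eq_mul_inv]
  simp only [Function.comp] at hm
  rw [he, hm.fderiv]
  have hW2 : (Real.sqrt (1 - ∑ l, η l ^ 2))^2 = 1 - ∑ l, η l ^2 := Real.sq_sqrt (by linarith)
  simp only [ContinuousLinearMap.add_apply, ContinuousLinearMap.smul_apply,
    ContinuousLinearMap.comp_apply, smul_eq_mul, LC_single]
  field_simp
  ring

lemma ut_fderiv2 {n : ℕ} (Ω : Set (Fin n → ℝ)) (hΩo : IsOpen Ω)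
    (hΩ1 : Ω ⊆ {ξ | ∑ l, ξ l ^ 2 < 1})
    (u : (Fin n → ℝ) → ℝ) (hu : ContDiffOn ℝ 2 u Ω)
    (ξ : Fin n → ℝ) (hmem : ξ ∈ Ω) (m' n' : Fin n) :
    fderiv ℝ (fun η => fderiv ℝ (fun η' => u η' / Real.sqrt (1 - ∑ l, η' l ^ 2)) η
        (Pi.single n' 1)) ξ (Pi.single m' 1)
      = fderiv ℝ (fun η => fderiv ℝ u η (Pi.single n' 1)) ξ (Pi.single m' 1)
            / Real.sqrt (1 - ∑ l, ξ l ^ 2)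
        + fderiv ℝ u ξ (Pi.single n' 1) * ξ m' / (Real.sqrt (1 - ∑ l, ξ l ^ 2)) ^ 3
        + fderiv ℝ u ξ (Pi.single m' 1) * ξ n' / (Real.sqrt (1 - ∑ l, ξ l ^ 2)) ^ 3
        + u ξ * (if n' = m' then 1 else 0) / (Real.sqrt (1 - ∑ l, ξ l ^ 2)) ^ 3
        + 3 * u ξ * ξ m' * ξ n' / (Real.sqrt (1 - ∑ l, ξ l ^ 2)) ^ 5 := by
  have hr : ∑ l, ξ l ^ 2 < 1 := hΩ1 hmem
  have hpos : 0 < Real.sqrt (1 - ∑ l, ξ l ^ 2) := Real.sqrt_pos.mpr (by linarith)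
  have hne := ne_of_gt hpos
  have hdiffu : ∀ η ∈ Ω, DifferentiableAt ℝ u η := fun η hη =>
    (hu.contDiffAt (hΩo.mem_nhds hη)).differentiableAt two_ne_zero
  -- replace the function by the explicit formula, eventually near ξ
  have hevent : (fun η => fderiv ℝ (fun η' => u η' / Real.sqrt (1 - ∑ l, η' l ^ 2)) η
        (Pi.single n' 1))
      =ᶠ[nhds ξ] fun η => fderiv ℝ u η (Pi.single n' 1) / Real.sqrt (1 - ∑ l, η l ^ 2)
        + u η * η n' / (Real.sqrt (1 - ∑ l, η l ^ 2)) ^ 3 := by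
    filter_upwards [hΩo.mem_nhds hmem] with η hη
    exact ut_fderiv u η (hdiffu η hη) (hΩ1 hη) n'
  rw [hevent.fderiv_eq]
  -- differentiability of the second-derivative atom
  have hA : DifferentiableAt ℝ (fun η => fderiv ℝ u η (Pi.single n' 1)) ξ := by
    have h1 : ContDiffAt ℝ 1 (fderiv ℝ u) ξ :=
      (hu.contDiffAt (hΩo.mem_nhds hmem)).fderiv_right (by norm_num)
    exact (h1.differentiableAt one_ne_zero).clm_apply (differentiableAt_const _)
  have hW := hasFDerivAt_W ξ hr
  have hinv := (hasDerivAt_inv hne).comp_hasFDerivAt ξ hW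
  have hinv3 : HasDerivAt (fun x : ℝ => (x ^ 3)⁻¹) (-(3 * (Real.sqrt (1 - ∑ l, ξ l ^ 2)) ^ 2) / ((Real.sqrt (1 - ∑ l, ξ l ^ 2)) ^ 3) ^ 2) (Real.sqrt (1 - ∑ l, ξ l ^ 2)) := by
    have h3 : HasDerivAt (fun x : ℝ => x ^ 3) (3 * (Real.sqrt (1 - ∑ l, ξ l ^ 2)) ^ 2)
        (Real.sqrt (1 - ∑ l, ξ l ^ 2)) := by
      simpa using hasDerivAt_pow 3 (Real.sqrt (1 - ∑ l, ξ l ^ 2))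
    simpa using h3.fun_inv (by positivity)
  have hinv3' := hinv3.comp_hasFDerivAt ξ hW
  have hproj := (ContinuousLinearMap.proj (R := ℝ) (φ := fun _ : Fin n => ℝ) n').hasFDerivAt (x := ξ)
  have hterm1 := hA.hasFDerivAt.fun_mul hinv
  have hterm2 := (((hdiffu ξ hmem).hasFDerivAt.fun_mul hproj)).fun_mul hinv3'
  have hsum := hterm1.fun_add hterm2
  simp only [Function.comp, ContinuousLinearMap.proj_apply] at hsum
  have he : (fun η => fderiv ℝ u η (Pi.single n' 1) / Real.sqrt (1 - ∑ l, η l ^ 2)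
        + u η * η n' / (Real.sqrt (1 - ∑ l, η l ^ 2)) ^ 3)
      = (fun η => fderiv ℝ u η (Pi.single n' 1) * (Real.sqrt (1 - ∑ l, η l ^ 2))⁻¹
        + (u η * η n') * ((Real.sqrt (1 - ∑ l, η l ^ 2)) ^ 3)⁻¹) := by
    funext η; rw [div_eq_mul_inv, div_eq_mul_inv]
  rw [he, hsum.fderiv]
  have hW2 : (Real.sqrt (1 - ∑ l, ξ l ^ 2))^2 = 1 - ∑ l, ξ l ^2 := Real.sq_sqrt (by linarith)
  simp only [ContinuousLinearMap.add_apply, ContinuousLinearMap.smul_apply,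
    ContinuousLinearMap.comp_apply, smul_eq_mul, LC_single,
    ContinuousLinearMap.proj_apply, Pi.single_apply]
  field_simp
  split_ifs <;> ring

lemma Sgx {n : ℕ} (ξ : Fin n → ℝ) (W : ℝ) (hW2 : W ^ 2 = 1 - ∑ l, ξ l ^ 2)
    (hWpos : 0 < W) (i : Fin n) :
    ∑ m, ((if i = m then 1 else 0) - ξ i * ξ m / (1 + W)) * ξ m = W * ξ i := by
  have h1W : (1 : ℝ) + W ≠ 0 := by positivity
  have h0 : ∀ m, ((if i = m then 1 else 0) - ξ i * ξ m / (1 + W)) * ξ m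
      = (if i = m then ξ m else 0) - ξ i / (1 + W) * ξ m ^ 2 := by
    intro m; split_ifs <;> ring
  rw [Finset.sum_congr rfl fun m _ => h0 m, Finset.sum_sub_distrib, Finset.sum_ite_eq,
    ← Finset.mul_sum]
  have hr' : ∑ l, ξ l ^ 2 = 1 - W ^ 2 := by linarith
  rw [hr']
  simp only [Finset.mem_univ, if_true]
  field_simp
  ring

lemma Sgg {n : ℕ} (ξ : Fin n → ℝ) (W : ℝ) (hW2 : W ^ 2 = 1 - ∑ l, ξ l ^ 2)
    (hWpos : 0 < W) (i j : Fin n) :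
    ∑ m, (((if i = m then 1 else 0) - ξ i * ξ m / (1 + W)) *
        ((if m = j then 1 else 0) - ξ m * ξ j / (1 + W)))
      = (if i = j then 1 else 0) - ξ i * ξ j := by
  have h1W : (1 : ℝ) + W ≠ 0 := by positivity
  have h0 : ∀ m, (((if i = m then 1 else 0) - ξ i * ξ m / (1 + W)) *
        ((if m = j then 1 else 0) - ξ m * ξ j / (1 + W)))
      = ((if i = m then (if m = j then 1 else 0) - ξ m * ξ j / (1 + W) else 0)
          - (if m = j then ξ i * ξ m / (1 + W) else 0))
        + ξ i * ξ j / (1 + W) ^ 2 * ξ m ^ 2 := by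
    intro m; split_ifs <;> field_simp <;> ring
  rw [Finset.sum_congr rfl fun m _ => h0 m, Finset.sum_add_distrib, Finset.sum_sub_distrib,
    Finset.sum_ite_eq, Finset.sum_ite_eq', ← Finset.mul_sum]
  have hr' : ∑ l, ξ l ^ 2 = 1 - W ^ 2 := by linarith
  rw [hr']
  simp only [Finset.mem_univ, if_true]
  rcases eq_or_ne i j with h | h <;> simp [h] <;> field_simp <;> ring
lemma Sxg {n : ℕ} (ξ : Fin n → ℝ) (W : ℝ) (hW2 : W ^ 2 = 1 - ∑ l, ξ l ^ 2)
    (hWpos : 0 < W) (j : Fin n) :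
    ∑ m, ξ m * ((if m = j then 1 else 0) - ξ m * ξ j / (1 + W)) = W * ξ j := by
  have h1W : (1 : ℝ) + W ≠ 0 := by positivity
  have h0 : ∀ m, ξ m * ((if m = j then 1 else 0) - ξ m * ξ j / (1 + W))
      = (if m = j then ξ m else 0) - ξ j / (1 + W) * ξ m ^ 2 := by
    intro m; split_ifs <;> ring
  rw [Finset.sum_congr rfl fun m _ => h0 m, Finset.sum_sub_distrib, Finset.sum_ite_eq',
    ← Finset.mul_sum]
  have hr' : ∑ l, ξ l ^ 2 = 1 - W ^ 2 := by linarith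
  rw [hr']
  simp only [Finset.mem_univ, if_true]
  field_simp
  ring

lemma helper1 {n : ℕ} (ξ A B : Fin n → ℝ) (c e dW : ℝ) (f : Fin n → Fin n → ℝ) :
    ∑ m', ∑ n', (A m' * f m' n' * B n' / dW
        + (if n' = m' then A m' * B n' else 0) * c
        + (A m' * ξ m') * (ξ n' * B n') * e)
      = (∑ m', ∑ n', A m' * f m' n' * B n') / dW
        + (∑ m', A m' * B m') * c
        + (∑ m', A m' * ξ m') * (∑ n', ξ n' * B n') * e := by
  have h1 : ∑ m', ∑ n', A m' * f m' n' * B n' / dW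
      = (∑ m', ∑ n', A m' * f m' n' * B n') / dW := by
    simp only [Finset.sum_div]
  have h2 : ∑ m', ∑ n', (if n' = m' then A m' * B n' else 0) * c
      = (∑ m', A m' * B m') * c := by
    rw [Finset.sum_mul]
    apply Finset.sum_congr rfl
    intro x _
    rw [← Finset.sum_mul, Finset.sum_ite_eq']
    simp
  have h3 : ∑ m', ∑ n', (A m' * ξ m') * (ξ n' * B n') * e
      = (∑ m', A m' * ξ m') * (∑ n', ξ n' * B n') * e := by
    have hin : ∀ x, ∑ n', (A x * ξ x) * (ξ n' * B n') * e
        = (A x * ξ x) * ((∑ n', ξ n' * B n') * e) := by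
      intro x
      calc ∑ n', (A x * ξ x) * (ξ n' * B n') * e
          = ∑ n', (ξ n' * B n') * (A x * ξ x * e) :=
            Finset.sum_congr rfl fun _ _ => by ring
        _ = (∑ n', ξ n' * B n') * (A x * ξ x * e) := by rw [← Finset.sum_mul]
        _ = (A x * ξ x) * ((∑ n', ξ n' * B n') * e) := by ring
    calc ∑ m', ∑ n', (A m' * ξ m') * (ξ n' * B n') * e
        = ∑ m', (A m' * ξ m') * ((∑ n', ξ n' * B n') * e) :=
          Finset.sum_congr rfl fun x _ => hin x
      _ = (∑ m', A m' * ξ m') * ((∑ n', ξ n' * B n') * e) := by rw [← Finset.sum_mul]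
      _ = (∑ m', A m' * ξ m') * (∑ n', ξ n' * B n') * e := by ring
  simp only [Finset.sum_add_distrib]
  rw [h1, h2, h3]

lemma final_alg {n : ℕ} (ξ : Fin n → ℝ) (W : ℝ) (hW2 : W ^ 2 = 1 - ∑ l, ξ l ^ 2)
    (hWpos : 0 < W) (uval : ℝ) (U1 : Fin n → ℝ) (U2 : Fin n → Fin n → ℝ) (i j : Fin n) :
    W ^ 2 * (∑ m', ∑ n', ((if i = m' then 1 else 0) - ξ i * ξ m' / (1 + W)) *
        ((U2 m' n' / W + U1 n' * ξ m' / W ^ 3 + U1 m' * ξ n' / W ^ 3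
          + uval * (if n' = m' then 1 else 0) / W ^ 3 + 3 * uval * ξ m' * ξ n' / W ^ 5)
          - ∑ s, ((ξ m' * (if n' = s then 1 else 0) + ξ n' * (if m' = s then 1 else 0))
              / (1 - ∑ l, ξ l ^ 2)) * (U1 s / W + uval * ξ s / W ^ 3)) *
        ((if n' = j then 1 else 0) - ξ n' * ξ j / (1 + W)))
      - (uval / W) * (if i = j then 1 else 0)
    = W * ∑ l, ∑ l', ((if i = l then 1 else 0) - ξ i * ξ l / (1 + W)) * U2 l l' *
        ((if l' = j then 1 else 0) - ξ l' * ξ j / (1 + W)) := by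
  have hWne : W ≠ 0 := ne_of_gt hWpos
  have h1W : (1 : ℝ) + W ≠ 0 := by positivity
  have hr' : ∑ l, ξ l ^ 2 = 1 - W ^ 2 := by linarith
  -- collapse the s-sum
  have hs : ∀ m' n' : Fin n,
      ∑ s, ((ξ m' * (if n' = s then 1 else 0) + ξ n' * (if m' = s then 1 else 0))
          / (1 - ∑ l, ξ l ^ 2)) * (U1 s / W + uval * ξ s / W ^ 3)
      = ξ m' * (U1 n' / W + uval * ξ n' / W ^ 3) / (1 - ∑ l, ξ l ^ 2)
        + ξ n' * (U1 m' / W + uval * ξ m' / W ^ 3) / (1 - ∑ l, ξ l ^ 2) := by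
    intro m' n'
    have h0 : ∀ s, ((ξ m' * (if n' = s then 1 else 0) + ξ n' * (if m' = s then 1 else 0))
          / (1 - ∑ l, ξ l ^ 2)) * (U1 s / W + uval * ξ s / W ^ 3)
        = (if n' = s then ξ m' * (U1 s / W + uval * ξ s / W ^ 3) / (1 - ∑ l, ξ l ^ 2) else 0)
          + (if m' = s then ξ n' * (U1 s / W + uval * ξ s / W ^ 3) / (1 - ∑ l, ξ l ^ 2) else 0) := by
      intro s; split_ifs <;> ring
    rw [Finset.sum_congr rfl fun s _ => h0 s, Finset.sum_add_distrib, Finset.sum_ite_eq,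
      Finset.sum_ite_eq]
    simp
  simp only [hs]
  -- per-term simplification of the bracket
  have hterm : ∀ m' n' : Fin n,
      ((if i = m' then 1 else 0) - ξ i * ξ m' / (1 + W)) *
        ((U2 m' n' / W + U1 n' * ξ m' / W ^ 3 + U1 m' * ξ n' / W ^ 3
          + uval * (if n' = m' then 1 else 0) / W ^ 3 + 3 * uval * ξ m' * ξ n' / W ^ 5)
          - (ξ m' * (U1 n' / W + uval * ξ n' / W ^ 3) / (1 - ∑ l, ξ l ^ 2)
            + ξ n' * (U1 m' / W + uval * ξ m' / W ^ 3) / (1 - ∑ l, ξ l ^ 2))) *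
        ((if n' = j then 1 else 0) - ξ n' * ξ j / (1 + W))
      = ((if i = m' then 1 else 0) - ξ i * ξ m' / (1 + W)) * U2 m' n' *
            ((if n' = j then 1 else 0) - ξ n' * ξ j / (1 + W)) / W
        + (if n' = m' then ((if i = m' then 1 else 0) - ξ i * ξ m' / (1 + W)) *
            ((if n' = j then 1 else 0) - ξ n' * ξ j / (1 + W)) else 0) * (uval / W ^ 3)
        + (((if i = m' then 1 else 0) - ξ i * ξ m' / (1 + W)) * ξ m') *
            (ξ n' * ((if n' = j then 1 else 0) - ξ n' * ξ j / (1 + W))) * (uval / W ^ 5) := by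
    intro m' n'
    rw [hr']
    split_ifs <;> field_simp <;> ring
  rw [Finset.sum_congr rfl fun m' _ => Finset.sum_congr rfl fun n' _ => hterm m' n',
    helper1 ξ _ _ _ _ _ _,
    Sgg ξ W hW2 hWpos i j, Sgx ξ W hW2 hWpos i, Sxg ξ W hW2 hWpos j]
  have hfin : ∀ S δ : ℝ,
      W ^ 2 * (S / W + (δ - ξ i * ξ j) * (uval / W ^ 3) + W * ξ i * (W * ξ j) * (uval / W ^ 5))
        - uval / W * δ = W * S := by
    intro S δ; field_simp; ring
  exact hfin _ _

/-- For a C² function `u` on `Ω ⊆ B₁`, the covariant Hessian of `ũ = u/w` with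
respect to the Klein-model hyperbolic metric, in the orthonormal frame `e_i = w γ̃_ik ∂_k`,
satisfies `∇̄_i∇̄_j(u/w) − (u/w)δ_ij = w γ̃_ik u_{kl} γ̃_lj`. -/
theorem stmt_14 (n : ℕ) (Ω : Set (Fin n → ℝ)) (hΩo : IsOpen Ω)
    (hΩ1 : Ω ⊆ {ξ | ∑ l, ξ l ^ 2 < 1})
    (u : (Fin n → ℝ) → ℝ) (hu : ContDiffOn ℝ 2 u Ω)
    (w : (Fin n → ℝ) → ℝ) (hw : ∀ ξ, w ξ = Real.sqrt (1 - ∑ l, ξ l ^ 2))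
    (γ : (Fin n → ℝ) → Fin n → Fin n → ℝ)
    (hγ : ∀ ξ i l, γ ξ i l = (if i = l then 1 else 0) - ξ i * ξ l / (1 + w ξ))
    (Γ : (Fin n → ℝ) → Fin n → Fin n → Fin n → ℝ)
    (hΓ : ∀ ξ s m' n', Γ ξ s m' n' =
      (ξ m' * (if n' = s then 1 else 0) + ξ n' * (if m' = s then 1 else 0))
        / (1 - ∑ l, ξ l ^ 2))
    (ut : (Fin n → ℝ) → ℝ) (hut : ∀ ξ, ut ξ = u ξ / w ξ)
    (ξ : Fin n → ℝ) (hmem : ξ ∈ Ω) :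
    ∀ i j,
      (w ξ) ^ 2 * (∑ m', ∑ n', γ ξ i m' *
          (fderiv ℝ (fun η => fderiv ℝ ut η (Pi.single n' 1)) ξ (Pi.single m' 1)
            - ∑ s, Γ ξ s m' n' * fderiv ℝ ut ξ (Pi.single s 1)) * γ ξ n' j)
        - ut ξ * (if i = j then 1 else 0)
      = w ξ * ∑ l, ∑ l', γ ξ i l *
          fderiv ℝ (fun η => fderiv ℝ u η (Pi.single l' 1)) ξ (Pi.single l 1) * γ ξ l' j := by
  intro i j
  have hr : ∑ l, ξ l ^ 2 < 1 := hΩ1 hmem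
  have hWpos : 0 < Real.sqrt (1 - ∑ l, ξ l ^ 2) := Real.sqrt_pos.mpr (by linarith)
  have hW2 : (Real.sqrt (1 - ∑ l, ξ l ^ 2)) ^ 2 = 1 - ∑ l, ξ l ^ 2 :=
    Real.sq_sqrt (by linarith)
  have hdiffu : DifferentiableAt ℝ u ξ :=
    (hu.contDiffAt (hΩo.mem_nhds hmem)).differentiableAt two_ne_zero
  have hutf : ut = fun η => u η / Real.sqrt (1 - ∑ l, η l ^ 2) := by
    funext η; rw [hut η, hw η]
  have E1 : ∀ s : Fin n, fderiv ℝ ut ξ (Pi.single s 1)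
      = fderiv ℝ u ξ (Pi.single s 1) / Real.sqrt (1 - ∑ l, ξ l ^ 2)
        + u ξ * ξ s / (Real.sqrt (1 - ∑ l, ξ l ^ 2)) ^ 3 := by
    intro s; rw [hutf]; exact ut_fderiv u ξ hdiffu hr s
  have E2 : ∀ m' n' : Fin n,
      fderiv ℝ (fun η => fderiv ℝ ut η (Pi.single n' 1)) ξ (Pi.single m' 1)
      = fderiv ℝ (fun η => fderiv ℝ u η (Pi.single n' 1)) ξ (Pi.single m' 1)
            / Real.sqrt (1 - ∑ l, ξ l ^ 2)
        + fderiv ℝ u ξ (Pi.single n' 1) * ξ m' / (Real.sqrt (1 - ∑ l, ξ l ^ 2)) ^ 3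
        + fderiv ℝ u ξ (Pi.single m' 1) * ξ n' / (Real.sqrt (1 - ∑ l, ξ l ^ 2)) ^ 3
        + u ξ * (if n' = m' then 1 else 0) / (Real.sqrt (1 - ∑ l, ξ l ^ 2)) ^ 3
        + 3 * u ξ * ξ m' * ξ n' / (Real.sqrt (1 - ∑ l, ξ l ^ 2)) ^ 5 := by
    intro m' n'; rw [hutf]; exact ut_fderiv2 Ω hΩo hΩ1 u hu ξ hmem m' n'
  have hutval : ut ξ = u ξ / Real.sqrt (1 - ∑ l, ξ l ^ 2) := by rw [hut, hw]
  simp only [hγ, hΓ, hw, hutval, E1, E2]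
  have := final_alg ξ (Real.sqrt (1 - ∑ l, ξ l ^ 2)) hW2 hWpos (u ξ)
    (fun s => fderiv ℝ u ξ (Pi.single s 1))
    (fun l l' => fderiv ℝ (fun η => fderiv ℝ u η (Pi.single l' 1)) ξ (Pi.single l 1)) i j
  simpa using this
end

section
/- Let λ₁ ≥ λ₂ ≥ ⋯ ≥ λₙ > 0 and F(λ) = (σ_n/σ_{n-k})^{1/k}(λ) with F^{ii} = ∂F/∂λ_i. Then for every i ≥ 2, (F^{ii} − F^{11})/(λ₁ − λ_i) − F^{ii}/λ₁ = σ_{n-1}(λ|1) σ_{n-k-1}(λ|1i)/(k F^{k-1} σ_{n-k}²) ≥ 0 (interpreting the left side as a limit when λ₁ = λ_i). -/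
open Finset

namespace Stmt16Aux

noncomputable def E (n l : ℕ) (v : Fin n → ℝ) : ℝ :=
  ∑ t ∈ Finset.powersetCard l Finset.univ, ∏ i ∈ t, v i

lemma E_update (n m : ℕ) (v : Fin n → ℝ) (j : Fin n) :
    E n m (Function.update v j 0)
      = ∑ t ∈ powersetCard m (univ : Finset (Fin n)),
          (if j ∈ t then 0 else ∏ i ∈ t, v i) := by
  unfold E
  refine Finset.sum_congr rfl fun t ht => ?_
  by_cases hjt : j ∈ t
  · simp only [hjt, if_true]
    exact Finset.prod_eq_zero hjt (by simp)
  · simp only [hjt, if_false]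
    exact Finset.prod_congr rfl fun i hit => Function.update_of_ne (by rintro rfl; exact hjt hit) _ _

lemma core_sum (n m : ℕ) (hm : 1 ≤ m) (v : Fin n → ℝ) (j : Fin n) :
    ∑ t ∈ powersetCard m (univ : Finset (Fin n)),
        (if j ∈ t then ∏ i ∈ t.erase j, v i else 0)
      = E n (m - 1) (Function.update v j 0) := by
  rw [E_update]
  rw [Finset.sum_ite, Finset.sum_const_zero, add_zero]
  rw [Finset.sum_ite, Finset.sum_const_zero, zero_add]
  refine Finset.sum_bij' (fun t _ => t.erase j) (fun t _ => insert j t) ?_ ?_ ?_ ?_ ?_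
  · intro t ht
    simp only [Finset.mem_filter, Finset.mem_powersetCard_univ] at ht ⊢
    exact ⟨by rw [Finset.card_erase_of_mem ht.2, ht.1], Finset.notMem_erase j t⟩
  · intro t ht
    simp only [Finset.mem_filter, Finset.mem_powersetCard_univ] at ht ⊢
    constructor
    · rw [Finset.card_insert_of_notMem ht.2, ht.1]; omega
    · exact Finset.mem_insert_self j t
  · intro t ht
    simp only [Finset.mem_filter] at ht
    exact Finset.insert_erase ht.2
  · intro t ht
    simp only [Finset.mem_filter] at ht
    exact Finset.erase_insert ht.2
  · intro t ht; rfl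

lemma dec (n m : ℕ) (hm : 1 ≤ m) (v : Fin n → ℝ) (j : Fin n) :
    E n m v = v j * E n (m - 1) (Function.update v j 0) + E n m (Function.update v j 0) := by
  rw [← core_sum n m hm v j, E_update, Finset.mul_sum, ← Finset.sum_add_distrib]
  unfold E
  refine Finset.sum_congr rfl fun t ht => ?_
  by_cases hjt : j ∈ t
  · simp only [hjt, if_true, mul_ite, mul_zero, add_zero]
    exact (Finset.mul_prod_erase t v hjt).symm
  · simp only [hjt, if_false, mul_zero, zero_add]


lemma E_top_zero (n : ℕ) (v : Fin n → ℝ) (j : Fin n) (hvj : v j = 0) : E n n v = 0 := by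
  unfold E
  refine Finset.sum_eq_zero fun t ht => ?_
  rw [Finset.mem_powersetCard_univ] at ht
  have : t = univ := Finset.eq_univ_of_card t (by simp [ht])
  exact Finset.prod_eq_zero (this ▸ Finset.mem_univ j) hvj

lemma E_sub1_zero (n : ℕ) (v : Fin n → ℝ) (j j' : Fin n) (hjj' : j ≠ j')
    (h1 : v j = 0) (h2 : v j' = 0) : E n (n - 1) v = 0 := by
  have hn2 : 2 ≤ n := by
    have : 1 < Fintype.card (Fin n) := Fintype.one_lt_card_iff.mpr ⟨j, j', hjj'⟩
    simp at this; omega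
  unfold E
  refine Finset.sum_eq_zero fun t ht => ?_
  rw [Finset.mem_powersetCard_univ] at ht
  by_cases hj : j ∈ t
  · exact Finset.prod_eq_zero hj h1
  by_cases hj' : j' ∈ t
  · exact Finset.prod_eq_zero hj' h2
  exfalso
  have hsub : t ⊆ (univ.erase j).erase j' := by
    intro x hx
    rw [Finset.mem_erase, Finset.mem_erase]
    exact ⟨fun h => hj' (h ▸ hx), fun h => hj (h ▸ hx), Finset.mem_univ x⟩
  have hcard : ((univ.erase j).erase j').card = n - 2 := by
    rw [Finset.card_erase_of_mem, Finset.card_erase_of_mem (Finset.mem_univ j)]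
    · simp; omega
    · exact Finset.mem_erase.mpr ⟨hjj'.symm, Finset.mem_univ j'⟩
  have := Finset.card_le_card hsub
  rw [ht, hcard] at this
  omega

lemma E_nonneg (n l : ℕ) (v : Fin n → ℝ) (hv : ∀ i, 0 ≤ v i) : 0 ≤ E n l v :=
  Finset.sum_nonneg fun t _ => Finset.prod_nonneg fun i _ => hv i

lemma E_pos (n l : ℕ) (hl : l ≤ n) (v : Fin n → ℝ) (hv : ∀ i, 0 < v i) : 0 < E n l v := by
  refine Finset.sum_pos (fun t _ => Finset.prod_pos fun i _ => hv i) ?_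
  exact Finset.powersetCard_nonempty.mpr (by simp [hl])

noncomputable def D (n m : ℕ) (lam : Fin n → ℝ) : (Fin n → ℝ) →L[ℝ] ℝ :=
  ∑ t ∈ powersetCard m (univ : Finset (Fin n)), ∑ i ∈ t,
    (∏ j ∈ t.erase i, lam j) • ContinuousLinearMap.proj i

lemma hasFDerivAt_E (n m : ℕ) (lam : Fin n → ℝ) :
    HasFDerivAt (E n m) (D n m lam) lam := by
  apply HasFDerivAt.fun_sum
  intro t ht
  exact HasFDerivAt.finset_prod fun i _ =>
    (ContinuousLinearMap.proj (R := ℝ) (φ := fun _ : Fin n => ℝ) i).hasFDerivAt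

lemma D_apply (n m : ℕ) (hm : 1 ≤ m) (lam : Fin n → ℝ) (j : Fin n) :
    D n m lam (Pi.single j 1) = E n (m - 1) (Function.update lam j 0) := by
  rw [← core_sum n m hm lam j]
  unfold D
  rw [ContinuousLinearMap.sum_apply]
  refine Finset.sum_congr rfl fun t ht => ?_
  rw [ContinuousLinearMap.sum_apply]
  simp only [ContinuousLinearMap.smul_apply, ContinuousLinearMap.proj_apply,
    Pi.single_apply, smul_eq_mul, mul_ite, mul_one, mul_zero]
  exact Finset.sum_ite_eq' t j fun i => ∏ j' ∈ t.erase i, lam j'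


lemma fderiv_F (n k : ℕ) (hk : 1 ≤ k) (hkn : k < n) (lam : Fin n → ℝ) (hpos : ∀ i, 0 < lam i)
    (F : (Fin n → ℝ) → ℝ)
    (hF : ∀ v, F v = (E n n v / E n (n - k) v) ^ ((1 : ℝ) / k)) (j : Fin n) :
    fderiv ℝ F lam (Pi.single j 1)
      = ((1 : ℝ) / k * (E n n lam / E n (n - k) lam) ^ ((1 : ℝ) / k - 1))
        * ((E n (n - 1) (Function.update lam j 0) * E n (n - k) lam
            - E n n lam * E n (n - k - 1) (Function.update lam j 0)) / (E n (n - k) lam) ^ 2) := by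
  have hFf : F = fun v => (E n n v / E n (n - k) v) ^ ((1 : ℝ) / k) := funext hF
  subst hFf
  have hσ : 0 < E n (n - k) lam := E_pos n (n - k) (by omega) lam hpos
  have hEn : 0 < E n n lam := E_pos n n le_rfl lam hpos
  have hQ : 0 < E n n lam / E n (n - k) lam := div_pos hEn hσ
  set e : Fin n → ℝ := Pi.single j 1 with he
  set g : ℝ → (Fin n → ℝ) := fun t => lam + t • e with hgdef
  have hg : HasDerivAt g e 0 := by
    have h := ((hasDerivAt_id (0 : ℝ)).smul_const e).const_add lam; rw [one_smul] at h; exact h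
  have hg0 : g 0 = lam := by simp [hgdef]
  have hP : HasDerivAt (fun t => E n n (g t)) (D n n lam e) 0 := by
    have := ((hasFDerivAt_E n n lam).comp_hasDerivAt_of_eq 0 hg hg0.symm)
    exact this
  have hR : HasDerivAt (fun t => E n (n - k) (g t)) (D n (n - k) lam e) 0 := by
    exact ((hasFDerivAt_E n (n - k) lam).comp_hasDerivAt_of_eq 0 hg hg0.symm)
  have hdiv : HasDerivAt (fun t => E n n (g t) / E n (n - k) (g t))
      ((D n n lam e * E n (n - k) lam - E n n lam * D n (n - k) lam e)
        / (E n (n - k) lam) ^ 2) 0 := by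
    have := hP.fun_div hR (by rw [hg0]; exact hσ.ne')
    simpa [hg0] using this
  have hrpow : HasDerivAt (fun t => (E n n (g t) / E n (n - k) (g t)) ^ ((1 : ℝ) / k))
      (((1 : ℝ) / k * (E n n lam / E n (n - k) lam) ^ ((1 : ℝ) / k - 1))
        * ((D n n lam e * E n (n - k) lam - E n n lam * D n (n - k) lam e)
            / (E n (n - k) lam) ^ 2)) 0 := by
    have h2 := hdiv.rpow_const (p := (1 : ℝ) / k) (by left; rw [hg0]; exact hQ.ne')
    rw [hg0] at h2
    convert h2 using 1
    ring
  have hdiffF : DifferentiableAt ℝ (fun v => (E n n v / E n (n - k) v) ^ ((1 : ℝ) / k)) lam := by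
    apply DifferentiableAt.rpow_const (p := (1 : ℝ) / k)
    · simp only [div_eq_mul_inv]
      exact ((hasFDerivAt_E n n lam).differentiableAt).mul
        (((hasFDerivAt_E n (n - k) lam).differentiableAt).inv hσ.ne')
    · left; exact hQ.ne'
  have h1 : HasDerivAt (fun t => (E n n (g t) / E n (n - k) (g t)) ^ ((1 : ℝ) / k))
      (fderiv ℝ (fun v => (E n n v / E n (n - k) v) ^ ((1 : ℝ) / k)) lam e) 0 :=
    (hdiffF.hasFDerivAt.comp_hasDerivAt_of_eq 0 hg hg0.symm)
  have huniq := h1.unique hrpow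
  rw [huniq, D_apply n n (by omega) lam j, D_apply n (n - k) (by omega) lam j]

end Stmt16Aux

open Stmt16Aux in

/-- For `λ₁ ≥ ⋯ ≥ λₙ > 0` and `F = (σ_n/σ_{n−k})^{1/k}`, for every `i ≥ 2`,
`(F^{ii} − F^{11})/(λ₁ − λ_i) − F^{ii}/λ₁ = σ_{n−1}(λ|1)σ_{n−k−1}(λ|1i)/(k F^{k−1} σ_{n−k}²) ≥ 0`
(the left-hand side interpreted for `λ₁ ≠ λ_i`). -/
theorem stmt_16 (n k : ℕ) (hn : 0 < n) (hk : 1 ≤ k) (hkn : k < n)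
    (esymm : ℕ → (Fin n → ℝ) → ℝ)
    (hesymm : ∀ l v, esymm l v = ∑ t ∈ Finset.powersetCard l Finset.univ, ∏ i ∈ t, v i)
    (F : (Fin n → ℝ) → ℝ)
    (hF : ∀ v, F v = (esymm n v / esymm (n - k) v) ^ ((1 : ℝ) / k))
    (lam : Fin n → ℝ) (hpos : ∀ i, 0 < lam i)
    (hsort : ∀ i j : Fin n, i ≤ j → lam j ≤ lam i)
    (i : Fin n) (hi : i ≠ ⟨0, hn⟩) :
    (lam ⟨0, hn⟩ ≠ lam i →
      (fderiv ℝ F lam (Pi.single i 1) - fderiv ℝ F lam (Pi.single ⟨0, hn⟩ 1))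
          / (lam ⟨0, hn⟩ - lam i)
        - fderiv ℝ F lam (Pi.single i 1) / lam ⟨0, hn⟩
      = esymm (n - 1) (Function.update lam ⟨0, hn⟩ 0)
          * esymm (n - k - 1) (Function.update (Function.update lam ⟨0, hn⟩ 0) i 0)
          / ((k : ℝ) * F lam ^ (k - 1) * (esymm (n - k) lam) ^ 2)) ∧
    0 ≤ esymm (n - 1) (Function.update lam ⟨0, hn⟩ 0)
          * esymm (n - k - 1) (Function.update (Function.update lam ⟨0, hn⟩ 0) i 0)
          / ((k : ℝ) * F lam ^ (k - 1) * (esymm (n - k) lam) ^ 2) := by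
  have hE' : ∀ l v, esymm l v = E n l v := fun l v => hesymm l v
  have hF' : ∀ v, F v = (E n n v / E n (n - k) v) ^ ((1 : ℝ) / k) := by
    intro v; rw [hF, hE', hE']
  set z : Fin n := ⟨0, hn⟩ with hzdef
  set a : ℝ := lam z with hadef
  set b : ℝ := lam i with hbdef
  have hn2 : 2 ≤ n := by omega
  set w1 : Fin n → ℝ := Function.update lam z 0 with hw1def
  set wi : Fin n → ℝ := Function.update lam i 0 with hwidef
  set w : Fin n → ℝ := Function.update w1 i 0 with hwdef
  have hw_comm : Function.update wi z 0 = w := by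
    rw [hwidef, hwdef, hw1def]
    exact Function.update_comm hi 0 0 lam
  have hw1i : w1 i = b := Function.update_of_ne hi 0 lam
  have hwiz : wi z = a := Function.update_of_ne (Ne.symm hi) 0 lam
  have hw1z : w1 z = 0 := Function.update_self z 0 lam
  have hwz : w z = 0 := by rw [hwdef]; rw [Function.update_of_ne (Ne.symm hi)]; exact hw1z
  have hwi0 : w i = 0 := Function.update_self i 0 w1
  have ha : 0 < a := hpos z
  have hσ : 0 < E n (n - k) lam := E_pos n (n - k) (by omega) lam hpos
  have hEnpos : 0 < E n n lam := E_pos n n le_rfl lam hpos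
  set σ : ℝ := E n (n - k) lam with hσdef
  set Q : ℝ := E n n lam / σ with hQdef
  have hQ : 0 < Q := div_pos hEnpos hσ
  -- expansions
  have hEnw1 : E n n w1 = 0 := E_top_zero n w1 z hw1z
  have hEw : E n (n - 1) w = 0 := E_sub1_zero n w z i (Ne.symm hi) hwz hwi0
  have hB1 : E n (n - 1) w1 = b * E n (n - 2) w := by
    have := dec n (n - 1) (by omega) w1 i
    rw [← hwdef, hw1i, hEw, add_zero] at this
    rw [this]
    norm_num [Nat.sub_sub]
  have hBi : E n (n - 1) wi = a * E n (n - 2) w := by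
    have := dec n (n - 1) (by omega) wi z
    rw [hw_comm, hwiz, hEw, add_zero] at this
    rw [this]
    norm_num [Nat.sub_sub]
  have hEn_eq : E n n lam = a * (b * E n (n - 2) w) := by
    have := dec n n (by omega) lam z
    rw [← hw1def, hEnw1, add_zero] at this
    have h1 : E n (n - 1) w1 = b * E n (n - 2) w := hB1
    rw [this, h1]
  have hm1 : 1 ≤ n - k := by omega
  have hσi : σ = b * E n (n - k - 1) wi + E n (n - k) wi := by
    have := dec n (n - k) hm1 lam i
    rw [← hwidef] at this
    exact this
  have hσz : σ = a * E n (n - k - 1) w1 + E n (n - k) w1 := by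
    have := dec n (n - k) hm1 lam z
    rw [← hw1def] at this
    exact this
  have hU : E n (n - k) w1 = b * E n (n - k - 1) w + E n (n - k) w := by
    have := dec n (n - k) hm1 w1 i
    rw [← hwdef, hw1i] at this
    exact this
  have hUi : E n (n - k) wi = a * E n (n - k - 1) w + E n (n - k) w := by
    have := dec n (n - k) hm1 wi z
    rw [hw_comm, hwiz] at this
    exact this
  -- derivative values
  set c : ℝ := (1 : ℝ) / k * Q ^ ((1 : ℝ) / k - 1) with hcdef
  have hdi : fderiv ℝ F lam (Pi.single i 1)
      = c * ((E n (n - 1) wi * σ - E n n lam * E n (n - k - 1) wi) / σ ^ 2) :=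
    fderiv_F n k hk hkn lam hpos F hF' i
  have hdz : fderiv ℝ F lam (Pi.single z 1)
      = c * ((E n (n - 1) w1 * σ - E n n lam * E n (n - k - 1) w1) / σ ^ 2) :=
    fderiv_F n k hk hkn lam hpos F hF' z
  -- numerator simplifications
  have hNi : E n (n - 1) wi * σ - E n n lam * E n (n - k - 1) wi
      = a * E n (n - 2) w * (a * E n (n - k - 1) w + E n (n - k) w) := by
    rw [hBi, hEn_eq]
    have hs : σ = b * E n (n - k - 1) wi
        + (a * E n (n - k - 1) w + E n (n - k) w) := by rw [hσi, hUi]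
    rw [hs]; ring
  have hN1 : E n (n - 1) w1 * σ - E n n lam * E n (n - k - 1) w1
      = b * E n (n - 2) w * (b * E n (n - k - 1) w + E n (n - k) w) := by
    rw [hB1, hEn_eq]
    have hs : σ = a * E n (n - k - 1) w1
        + (b * E n (n - k - 1) w + E n (n - k) w) := by rw [hσz, hU]
    rw [hs]; ring
  -- the rpow bookkeeping
  have hkR : (0 : ℝ) < (k : ℝ) := Nat.cast_pos.mpr (by omega)
  have hFlam : F lam = Q ^ ((1 : ℝ) / k) := by rw [hF' lam, ← hσdef, ← hQdef]
  have hFlampos : 0 < F lam := by rw [hFlam]; exact Real.rpow_pos_of_pos hQ _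
  have hKpow : (F lam) ^ (k - 1) = Q ^ ((1 : ℝ) / k * ((k : ℝ) - 1)) := by
    rw [hFlam, ← Real.rpow_natCast (Q ^ ((1 : ℝ) / k)) (k - 1), ← Real.rpow_mul hQ.le]
    congr 1
    rw [Nat.cast_sub hk, Nat.cast_one]
  set K : ℝ := (k : ℝ) * F lam ^ (k - 1) with hKdef
  have hKpos : 0 < K := mul_pos hkR (pow_pos hFlampos _)
  have hcK : c * K = 1 := by
    have hexp : (1 : ℝ) / k - 1 + (1 : ℝ) / k * ((k : ℝ) - 1) = 0 := by field_simp; ring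
    calc c * K
        = ((1 : ℝ) / k * (k : ℝ))
          * (Q ^ ((1 : ℝ) / k - 1) * Q ^ ((1 : ℝ) / k * ((k : ℝ) - 1))) := by
          rw [hKdef, hKpow, hcdef]; ring
      _ = ((1 : ℝ) / k * (k : ℝ))
          * Q ^ ((1 : ℝ) / k - 1 + (1 : ℝ) / k * ((k : ℝ) - 1)) := by
          rw [← Real.rpow_add hQ]
      _ = 1 := by rw [hexp, Real.rpow_zero, mul_one]; field_simp
  have hcinv : c = K⁻¹ := eq_inv_of_mul_eq_one_left hcK
  constructor
  · intro hne
    have hab : a - b ≠ 0 := sub_ne_zero.mpr hne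
    rw [hdi, hdz, hNi, hN1, hE', hE', hE', hB1, hcinv]
    rw [← hσdef]
    field_simp
    ring
  · rw [hE', hE', hE', ← hσdef]
    apply div_nonneg
    · apply mul_nonneg
      · apply E_nonneg
        intro j
        rw [hw1def, Function.update_apply]
        split_ifs
        · exact le_refl 0
        · exact (hpos j).le
      · apply E_nonneg
        intro j
        rw [hwdef, Function.update_apply, hw1def, Function.update_apply]
        split_ifs <;> first | rfl | exact (hpos j).le
    · positivity
end

section
/- Let λ = (λ₁,…,λₙ) with all λ_i > 0, F(λ) = (σ_n/σ_{n-k})^{1/k}(λ), and σ_k(1/λ₁,…,1/λₙ) = C(n,k) (equivalently F(λ) = C(n,k)^{-1/k}). Then k F^{k-1} F^{11} ≤ 1/(λ₁ C(n,k)) and Σ_i F^{ii}(λ) ≥ C(n,k)^{-1/k}. -/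
open Finset

section Aux
variable {n : ℕ}

lemma core_lemma {m : ℕ} (f : Finset (Fin n) → Fin n → ℝ) :
    ∑ t ∈ powersetCard (m+1) (univ : Finset (Fin n)), ∑ i ∈ t, f (t.erase i) i
      = ∑ s ∈ powersetCard m (univ : Finset (Fin n)), ∑ i ∈ sᶜ, f s i := by
  rw [Finset.sum_sigma' (powersetCard (m+1) (univ : Finset (Fin n))) (fun t => t)
      (fun t i => f (t.erase i) i),
    Finset.sum_sigma' (powersetCard m (univ : Finset (Fin n))) (fun s => sᶜ) (fun s i => f s i)]
  apply Finset.sum_nbij' (i := fun p => ⟨p.1.erase p.2, p.2⟩)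
    (j := fun p => ⟨insert p.2 p.1, p.2⟩)
  · rintro ⟨t, i⟩ hp
    simp only [Finset.mem_sigma, mem_powersetCard_univ] at hp ⊢
    obtain ⟨ht, hi⟩ := hp
    refine ⟨by rw [Finset.card_erase_of_mem hi, ht]; rfl, by simp⟩
  · rintro ⟨s, i⟩ hp
    simp only [Finset.mem_sigma, mem_powersetCard_univ, Finset.mem_compl] at hp ⊢
    obtain ⟨hs, hi⟩ := hp
    exact ⟨by rw [Finset.card_insert_of_notMem hi, hs], Finset.mem_insert_self _ _⟩
  · rintro ⟨t, i⟩ hp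
    simp only [Finset.mem_sigma, mem_powersetCard_univ] at hp
    simp [Finset.insert_erase hp.2]
  · rintro ⟨s, i⟩ hp
    simp only [Finset.mem_sigma, mem_powersetCard_univ, Finset.mem_compl] at hp
    simp [Finset.erase_insert hp.2]
  · rintro ⟨t, i⟩ hp; rfl

lemma rev_lemma {j : ℕ} (hj : j ≤ n) (lam : Fin n → ℝ) (h0 : ∀ i, lam i ≠ 0) :
    ∑ t ∈ powersetCard j (univ : Finset (Fin n)), ∏ i ∈ t, (lam i)⁻¹
      = (∑ t ∈ powersetCard (n-j) (univ : Finset (Fin n)), ∏ i ∈ t, lam i) / ∏ i, lam i := by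
  have hP : (∏ i, lam i) ≠ 0 := Finset.prod_ne_zero_iff.2 fun i _ => h0 i
  rw [eq_div_iff hP, Finset.sum_mul]
  apply Finset.sum_nbij' (i := fun t => tᶜ) (j := fun t => tᶜ)
  · intro t ht
    simp only [mem_powersetCard_univ] at ht ⊢
    rw [Finset.card_compl, Fintype.card_fin, ht]
  · intro t ht
    simp only [mem_powersetCard_univ] at ht ⊢
    rw [Finset.card_compl, Fintype.card_fin, ht, Nat.sub_sub_self hj]
  · intro t _; simp
  · intro t _; simp
  · intro t _
    have hmul : (∏ i ∈ t, lam i) * ∏ i ∈ tᶜ, lam i = ∏ i, lam i :=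
      Finset.prod_mul_prod_compl t lam
    have ht0 : (∏ i ∈ t, lam i) ≠ 0 := Finset.prod_ne_zero_iff.2 fun i _ => h0 i
    rw [Finset.prod_inv_distrib, ← hmul, inv_mul_cancel_left₀ ht0]

noncomputable def Dl (l : ℕ) (lam : Fin n → ℝ) : (Fin n → ℝ) →L[ℝ] ℝ :=
  ∑ t ∈ powersetCard l (univ : Finset (Fin n)), ∑ i ∈ t,
    (∏ j ∈ t.erase i, lam j) • (ContinuousLinearMap.proj i : (Fin n → ℝ) →L[ℝ] ℝ)

lemma hasfd (l : ℕ) (lam : Fin n → ℝ) :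
    HasFDerivAt (fun v : Fin n → ℝ => ∑ t ∈ powersetCard l (univ : Finset (Fin n)), ∏ i ∈ t, v i)
      (Dl l lam) lam := by
  apply HasFDerivAt.fun_sum
  intro t ht
  exact HasFDerivAt.finset_prod (fun i _ => hasFDerivAt_apply i lam)

lemma Dl_single (l : ℕ) (lam : Fin n → ℝ) (i0 : Fin n) :
    Dl l lam (Pi.single i0 1)
      = ∑ t ∈ powersetCard l (univ : Finset (Fin n)),
          if i0 ∈ t then ∏ j ∈ t.erase i0, lam j else 0 := by
  simp only [Dl, ContinuousLinearMap.coe_sum', Finset.sum_apply,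
    ContinuousLinearMap.coe_smul', Pi.smul_apply, ContinuousLinearMap.proj_apply,
    Pi.single_apply, smul_eq_mul, mul_ite, mul_one, mul_zero]
  refine Finset.sum_congr rfl fun t _ => ?_
  rw [Finset.sum_ite_eq' t i0 (fun j => ∏ x ∈ t.erase j, lam x)]

lemma key_ineq {k : ℕ} (hk : 1 ≤ k) (μ : Fin n → ℝ) (hμ : ∀ i, 0 < μ i)
    (hcon : ∑ t ∈ powersetCard k (univ : Finset (Fin n)), ∏ i ∈ t, μ i = n.choose k) :
    (k : ℝ) * n.choose k
        + ((k : ℝ) + 1) * ∑ t ∈ powersetCard (k+1) (univ : Finset (Fin n)), ∏ i ∈ t, μ i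
      ≤ (∑ i, μ i) * n.choose k := by
  have hkR : (0:ℝ) < k := by exact_mod_cast hk
  have hid : (∑ i, μ i) * (n.choose k : ℝ)
      = (∑ t ∈ powersetCard k (univ : Finset (Fin n)), (∏ i ∈ t, μ i) * ∑ i ∈ t, μ i)
        + ((k : ℝ) + 1) * ∑ t ∈ powersetCard (k+1) (univ : Finset (Fin n)), ∏ i ∈ t, μ i := by
    rw [← hcon, mul_comm, Finset.sum_mul]
    have step1 : ∀ t ∈ powersetCard k (univ : Finset (Fin n)),
        (∏ i ∈ t, μ i) * ∑ i, μ i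
          = (∏ i ∈ t, μ i) * ∑ i ∈ t, μ i + ∑ i ∈ tᶜ, μ i * ∏ j ∈ t, μ j := by
      intro t _
      rw [← Finset.sum_add_sum_compl t μ, mul_add]
      congr 1
      rw [Finset.mul_sum]
      exact Finset.sum_congr rfl fun i _ => mul_comm _ _
    rw [Finset.sum_congr rfl step1, Finset.sum_add_distrib]
    congr 1
    rw [← core_lemma (f := fun s i => μ i * ∏ j ∈ s, μ j)]
    have step2 : ∀ t ∈ powersetCard (k+1) (univ : Finset (Fin n)),
        ∑ i ∈ t, μ i * ∏ j ∈ t.erase i, μ j = ((k:ℝ)+1) * ∏ i ∈ t, μ i := by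
      intro t ht
      rw [mem_powersetCard_univ] at ht
      rw [Finset.sum_congr rfl (fun i hi => Finset.mul_prod_erase t μ hi),
        Finset.sum_const, ht, nsmul_eq_mul]
      push_cast
      ring
    rw [Finset.sum_congr rfl step2, ← Finset.mul_sum]
  rw [hid]
  have hcard : (powersetCard k (univ : Finset (Fin n))).card = n.choose k := by
    rw [Finset.card_powersetCard, Finset.card_univ, Fintype.card_fin]
  have hpt : ∀ t ∈ powersetCard k (univ : Finset (Fin n)),
      (k : ℝ) * (1 + (1 + (k:ℝ)⁻¹) * ((∏ i ∈ t, μ i) - 1))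
        ≤ (∏ i ∈ t, μ i) * ∑ i ∈ t, μ i := by
    intro t ht
    rw [mem_powersetCard_univ] at ht
    have hx : (0:ℝ) < ∏ i ∈ t, μ i := Finset.prod_pos fun i _ => hμ i
    have hamgm : (∏ i ∈ t, μ i) ^ ((k:ℝ)⁻¹) ≤ (k:ℝ)⁻¹ * ∑ i ∈ t, μ i := by
      have := Real.geom_mean_le_arith_mean_weighted t (fun _ => (k:ℝ)⁻¹) μ
        (fun i _ => by positivity) (by rw [Finset.sum_const, ht, nsmul_eq_mul]; field_simp)
        (fun i _ => (hμ i).le)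
      calc (∏ i ∈ t, μ i) ^ ((k:ℝ)⁻¹) = ∏ i ∈ t, μ i ^ ((k:ℝ)⁻¹) := by
            rw [← Real.finset_prod_rpow t μ (fun i _ => (hμ i).le)]
        _ ≤ ∑ i ∈ t, (k:ℝ)⁻¹ * μ i := this
        _ = (k:ℝ)⁻¹ * ∑ i ∈ t, μ i := by rw [Finset.mul_sum]
    have hbern : 1 + (1 + (k:ℝ)⁻¹) * ((∏ i ∈ t, μ i) - 1)
        ≤ (∏ i ∈ t, μ i) ^ (1 + (k:ℝ)⁻¹) := by
      have := one_add_mul_self_le_rpow_one_add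
        (s := (∏ i ∈ t, μ i) - 1) (by linarith) (p := 1 + (k:ℝ)⁻¹)
        (le_add_of_nonneg_right (by positivity))
      simpa using this
    have hsplit : (∏ i ∈ t, μ i) ^ (1 + (k:ℝ)⁻¹)
        = (∏ i ∈ t, μ i) * (∏ i ∈ t, μ i) ^ ((k:ℝ)⁻¹) := by
      rw [Real.rpow_add hx, Real.rpow_one]
    calc (k : ℝ) * (1 + (1 + (k:ℝ)⁻¹) * ((∏ i ∈ t, μ i) - 1))
        ≤ (k : ℝ) * ((∏ i ∈ t, μ i) * (∏ i ∈ t, μ i) ^ ((k:ℝ)⁻¹)) := by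
          rw [← hsplit]; exact mul_le_mul_of_nonneg_left hbern hkR.le
      _ ≤ (∏ i ∈ t, μ i) * ∑ i ∈ t, μ i := by
          have h := mul_le_mul_of_nonneg_left hamgm hx.le
          calc (k : ℝ) * ((∏ i ∈ t, μ i) * (∏ i ∈ t, μ i) ^ ((k:ℝ)⁻¹))
              ≤ (k:ℝ) * ((∏ i ∈ t, μ i) * ((k:ℝ)⁻¹ * ∑ i ∈ t, μ i)) :=
                mul_le_mul_of_nonneg_left h hkR.le
            _ = (∏ i ∈ t, μ i) * ∑ i ∈ t, μ i := by field_simp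
  have hsum : (k : ℝ) * (n.choose k : ℝ)
      ≤ ∑ t ∈ powersetCard k (univ : Finset (Fin n)), (∏ i ∈ t, μ i) * ∑ i ∈ t, μ i := by
    calc (k : ℝ) * (n.choose k : ℝ)
        = ∑ t ∈ powersetCard k (univ : Finset (Fin n)),
            (k : ℝ) * (1 + (1 + (k:ℝ)⁻¹) * ((∏ i ∈ t, μ i) - 1)) := by
          rw [← Finset.mul_sum]
          congr 1
          rw [Finset.sum_add_distrib, Finset.sum_const, hcard, ← Finset.mul_sum,
            Finset.sum_sub_distrib, hcon, Finset.sum_const, hcard, nsmul_eq_mul, mul_one]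
          ring
      _ ≤ _ := Finset.sum_le_sum hpt
  linarith

end Aux

set_option maxHeartbeats 2000000 in
/-- If all `λ_i > 0` and `σ_k(1/λ) = C(n,k)`, then for
`F = (σ_n/σ_{n−k})^{1/k}` one has `k F^{k−1} F^{ii} ≤ 1/(λ_i C(n,k))` and
`Σ_i F^{ii} ≥ C(n,k)^{−1/k}`. -/
theorem stmt_17 (n k : ℕ) (hk : 1 ≤ k) (hkn : k < n)
    (esymm : ℕ → (Fin n → ℝ) → ℝ)
    (hesymm : ∀ l v, esymm l v = ∑ t ∈ Finset.powersetCard l Finset.univ, ∏ i ∈ t, v i)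
    (F : (Fin n → ℝ) → ℝ)
    (hF : ∀ v, F v = (esymm n v / esymm (n - k) v) ^ ((1 : ℝ) / k))
    (lam : Fin n → ℝ) (hpos : ∀ i, 0 < lam i)
    (hconstraint : esymm k (fun i => (lam i)⁻¹) = n.choose k) :
    (∀ i, (k : ℝ) * F lam ^ (k - 1) * fderiv ℝ F lam (Pi.single i 1)
        ≤ 1 / (lam i * n.choose k)) ∧
    (n.choose k : ℝ) ^ (-(1 : ℝ) / k) ≤ ∑ i, fderiv ℝ F lam (Pi.single i 1) := by
  classical
  have hlam0 : ∀ i, lam i ≠ 0 := fun i => (hpos i).ne'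
  have hP : (0:ℝ) < ∏ i, lam i := Finset.prod_pos fun i _ => hpos i
  have hkn' : k ≤ n := hkn.le
  have hC : (0:ℝ) < (n.choose k : ℝ) := by exact_mod_cast Nat.choose_pos hkn'
  have hkR : (0:ℝ) < (k:ℝ) := by exact_mod_cast hk
  set C : ℝ := (n.choose k : ℝ) with hCdef
  set P : ℝ := ∏ i, lam i with hPdef
  set SN : ℝ := ∑ t ∈ powersetCard n (univ : Finset (Fin n)), ∏ i ∈ t, lam i with hSNdef
  set SA : ℝ := ∑ t ∈ powersetCard (n-k) (univ : Finset (Fin n)), ∏ i ∈ t, lam i with hSAdef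
  -- constraint in sum form
  have hcon' : ∑ t ∈ powersetCard k (univ : Finset (Fin n)), ∏ i ∈ t, (lam i)⁻¹ = C := by
    rw [hesymm] at hconstraint
    exact hconstraint
  have hSA : SA = C * P := by
    have h := hcon'
    rw [rev_lemma hkn' lam hlam0] at h
    rw [div_eq_iff hP.ne'] at h
    rw [← h]
  have hSA0 : (0:ℝ) < SA := by rw [hSA]; positivity
  -- S_n = product
  have hpowc : powersetCard n (univ : Finset (Fin n)) = {univ} := by
    have h := Finset.powersetCard_self (univ : Finset (Fin n))
    rwa [Finset.card_univ, Fintype.card_fin] at h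
  have hSNP : SN = P := by
    rw [hSNdef, hpowc, Finset.sum_singleton]
  have hG0 : (0:ℝ) < SN * SA⁻¹ := by rw [hSNP]; positivity
  -- the derivative
  have h3 : HasFDerivAt
      (fun v : Fin n → ℝ => (∑ t ∈ powersetCard (n-k) (univ : Finset (Fin n)), ∏ i ∈ t, v i)⁻¹)
      ((-(SA^2)⁻¹) • Dl (n-k) lam) lam :=
    (hasDerivAt_inv hSA0.ne').comp_hasFDerivAt lam (hasfd (n-k) lam)
  have h4 := (hasfd (n := n) n lam).mul h3
  have h5 := (Real.hasDerivAt_rpow_const (x := SN * SA⁻¹) (p := (1:ℝ)/k)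
    (Or.inl hG0.ne')).comp_hasFDerivAt lam h4
  have hFeq : F = fun v : Fin n → ℝ =>
      ((∑ t ∈ powersetCard n (univ : Finset (Fin n)), ∏ i ∈ t, v i) *
        (∑ t ∈ powersetCard (n-k) (univ : Finset (Fin n)), ∏ i ∈ t, v i)⁻¹) ^ ((1:ℝ)/k) :=
    funext fun v => by rw [hF, hesymm, hesymm, div_eq_mul_inv]
  have h6 : HasFDerivAt F
      (((1:ℝ)/k * (SN * SA⁻¹) ^ ((1:ℝ)/k - 1)) •
        (SN • ((-(SA^2)⁻¹) • Dl (n-k) lam) + SA⁻¹ • Dl n lam)) lam := by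
    rw [hFeq]; exact h5
  have happ : ∀ w, fderiv ℝ F lam w
      = ((1:ℝ)/k * (SN * SA⁻¹) ^ ((1:ℝ)/k - 1)) *
        (SN * ((-(SA^2)⁻¹) * Dl (n-k) lam w) + SA⁻¹ * Dl n lam w) := by
    intro w
    rw [h6.fderiv]
    simp only [ContinuousLinearMap.coe_smul', Pi.smul_apply, ContinuousLinearMap.add_apply,
      smul_eq_mul]
  have hFl : F lam = (SN * SA⁻¹) ^ ((1:ℝ)/k) := by
    rw [hF, hesymm, hesymm, div_eq_mul_inv]
  -- the normalization factor equals 1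
  have e3 : ((1:ℝ)/k) * ((k-1 : ℕ) : ℝ) + ((1:ℝ)/k - 1) = 0 := by
    rw [Nat.cast_sub hk]
    field_simp
    push_cast
    ring
  have hfac : (k:ℝ) * ((SN * SA⁻¹) ^ ((1:ℝ)/k)) ^ (k-1)
      * ((1:ℝ)/k * (SN * SA⁻¹) ^ ((1:ℝ)/k - 1)) = 1 := by
    rw [← Real.rpow_natCast ((SN * SA⁻¹) ^ ((1:ℝ)/k)) (k-1), ← Real.rpow_mul hG0.le]
    have hr : (k:ℝ) * (SN * SA⁻¹) ^ (((1:ℝ)/k) * ((k-1:ℕ):ℝ))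
        * ((1:ℝ)/k * (SN * SA⁻¹) ^ ((1:ℝ)/k - 1))
        = ((k:ℝ) * ((1:ℝ)/k)) * ((SN * SA⁻¹) ^ (((1:ℝ)/k) * ((k-1:ℕ):ℝ))
            * (SN * SA⁻¹) ^ ((1:ℝ)/k - 1)) := by ring
    rw [hr, ← Real.rpow_add hG0, e3, Real.rpow_zero, mul_one, mul_one_div,
      div_self hkR.ne']
  -- coordinate values of the derivative pieces
  have hDn : ∀ i, Dl n lam (Pi.single i 1) = P * (lam i)⁻¹ := by
    intro i
    rw [Dl_single, hpowc, Finset.sum_singleton, if_pos (Finset.mem_univ i),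
      eq_mul_inv_iff_mul_eq₀ (hlam0 i)]
    exact Finset.prod_erase_mul Finset.univ lam (Finset.mem_univ i)
  have hDk0 : ∀ i, 0 ≤ Dl (n-k) lam (Pi.single i 1) := by
    intro i
    rw [Dl_single]
    refine Finset.sum_nonneg fun t _ => ?_
    split
    · exact Finset.prod_nonneg fun j _ => (hpos j).le
    · exact le_refl _
  constructor
  · -- first claim
    intro i
    rw [happ (Pi.single i 1), hFl]
    have hre : (k:ℝ) * ((SN * SA⁻¹) ^ ((1:ℝ)/k)) ^ (k-1)
        * (((1:ℝ)/k * (SN * SA⁻¹) ^ ((1:ℝ)/k - 1)) *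
            (SN * ((-(SA^2)⁻¹) * Dl (n-k) lam (Pi.single i 1)) + SA⁻¹ * Dl n lam (Pi.single i 1)))
        = ((k:ℝ) * ((SN * SA⁻¹) ^ ((1:ℝ)/k)) ^ (k-1)
            * ((1:ℝ)/k * (SN * SA⁻¹) ^ ((1:ℝ)/k - 1)))
          * (SN * ((-(SA^2)⁻¹) * Dl (n-k) lam (Pi.single i 1))
              + SA⁻¹ * Dl n lam (Pi.single i 1)) := by ring
    rw [hre, hfac, one_mul, hDn i]
    have h1st : SN * ((-(SA^2)⁻¹) * Dl (n-k) lam (Pi.single i 1)) ≤ 0 := by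
      have h0 : (0:ℝ) ≤ (SA^2)⁻¹ * Dl (n-k) lam (Pi.single i 1) :=
        mul_nonneg (by positivity) (hDk0 i)
      have hSNpos : (0:ℝ) < SN := by rw [hSNP]; exact hP
      nlinarith
    have h2nd : SA⁻¹ * (P * (lam i)⁻¹) = 1 / (lam i * C) := by
      rw [hSA]
      field_simp
    linarith
  · -- second claim
    have hsum : ∑ i, fderiv ℝ F lam (Pi.single i 1)
        = ((1:ℝ)/k * (SN * SA⁻¹) ^ ((1:ℝ)/k - 1)) *
          (SN * ((-(SA^2)⁻¹) * ∑ i, Dl (n-k) lam (Pi.single i 1))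
            + SA⁻¹ * (P * ∑ i, (lam i)⁻¹)) := by
      rw [Finset.sum_congr rfl (fun i _ => happ (Pi.single i 1)), ← Finset.mul_sum]
      congr 1
      rw [Finset.sum_add_distrib, ← Finset.mul_sum, ← Finset.mul_sum, ← Finset.mul_sum]
      congr 2
      rw [Finset.sum_congr rfl (fun i _ => hDn i), ← Finset.mul_sum]
    -- sum of D_{n-k} coordinates
    have hnk1 : n - k = (n - (k+1)) + 1 := by omega
    have hsumDk : ∑ i, Dl (n-k) lam (Pi.single i 1)
        = ((k:ℝ)+1) * ∑ s ∈ powersetCard (n-(k+1)) (univ : Finset (Fin n)), ∏ j ∈ s, lam j := by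
      rw [Finset.sum_congr rfl (fun i (_ : i ∈ univ) => Dl_single (n-k) lam i), Finset.sum_comm]
      have hin : ∀ t ∈ powersetCard (n-k) (univ : Finset (Fin n)),
          (∑ i, if i ∈ t then ∏ j ∈ t.erase i, lam j else 0)
            = ∑ i ∈ t, ∏ j ∈ t.erase i, lam j := by
        intro t _
        rw [Finset.sum_ite_mem, Finset.univ_inter]
      rw [Finset.sum_congr rfl hin, hnk1, core_lemma (f := fun s _ => ∏ j ∈ s, lam j)]
      have hout : ∀ s ∈ powersetCard (n-(k+1)) (univ : Finset (Fin n)),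
          (∑ _i ∈ sᶜ, ∏ j ∈ s, lam j) = ((k:ℝ)+1) * ∏ j ∈ s, lam j := by
        intro s hs
        rw [mem_powersetCard_univ] at hs
        rw [Finset.sum_const, nsmul_eq_mul, Finset.card_compl, Fintype.card_fin, hs]
        congr 1
        have : n - (n - (k+1)) = k + 1 := by omega
        rw [this]
        push_cast
        ring
      rw [Finset.sum_congr rfl hout, ← Finset.mul_sum]
    -- reversal for k+1
    have hrev1 : ∑ s ∈ powersetCard (n-(k+1)) (univ : Finset (Fin n)), ∏ j ∈ s, lam j
        = (∑ t ∈ powersetCard (k+1) (univ : Finset (Fin n)), ∏ i ∈ t, (lam i)⁻¹) * P := by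
      rw [rev_lemma (by omega : k + 1 ≤ n) lam hlam0, div_mul_cancel₀]
      exact hP.ne'
    set pk1 : ℝ := ∑ t ∈ powersetCard (k+1) (univ : Finset (Fin n)), ∏ i ∈ t, (lam i)⁻¹
      with hpk1def
    have hpk10 : 0 ≤ pk1 := by
      rw [hpk1def]
      exact Finset.sum_nonneg fun t _ => Finset.prod_nonneg fun i _ => inv_nonneg.2 (hpos i).le
    set p1 : ℝ := ∑ i, (lam i)⁻¹ with hp1def
    -- key inequality
    have hkey : (k : ℝ) * C + ((k : ℝ) + 1) * pk1 ≤ p1 * C := by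
      exact key_ineq hk (fun i => (lam i)⁻¹) (fun i => inv_pos.2 (hpos i)) hcon'
    rw [hsum, hsumDk, hrev1]
    -- now pure scalar manipulation
    rw [hSNP, hSA]
    have hGval : P * (C * P)⁻¹ = C⁻¹ := by
      field_simp
    rw [hGval]
    have hpowrw : (C⁻¹ : ℝ) ^ ((1:ℝ)/k - 1) = C * C ^ (-(1:ℝ)/k) := by
      rw [Real.inv_rpow hC.le, ← Real.rpow_neg hC.le,
        show -((1:ℝ)/(k:ℝ) - 1) = 1 + -(1:ℝ)/(k:ℝ) by ring, Real.rpow_add hC, Real.rpow_one]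
    rw [hpowrw]
    have hstep : ∀ R : ℝ, 1/(k:ℝ) * (C * R) *
        (P * (-((C * P) ^ 2)⁻¹ * (((k:ℝ) + 1) * (pk1 * P))) + (C * P)⁻¹ * (P * p1))
        = R * ((p1 * C - ((k:ℝ) + 1) * pk1) / ((k:ℝ) * C)) := by
      intro R
      field_simp
      ring
    rw [hstep (C ^ (-1/(k:ℝ)))]
    have hfrac : 1 ≤ (p1 * C - ((k:ℝ) + 1) * pk1) / ((k:ℝ) * C) := by
      rw [le_div_iff₀ (by positivity)]
      nlinarith [hkey]
    have hR0 : (0:ℝ) < C ^ (-1/(k:ℝ)) := Real.rpow_pos_of_pos hC _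
    calc C ^ (-1/(k:ℝ)) = C ^ (-1/(k:ℝ)) * 1 := (mul_one _).symm
      _ ≤ _ := mul_le_mul_of_nonneg_left hfrac hR0.le
end
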